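/- Let (T1, B1, E1) and (T2, B2, E2) be regular generalized boundary problems with T1 : V → W and T2 : U → V surjective K-linear maps, B1 ≤ V* and B2 ≤ U* finite-dimensional, and let G1 and G2 be their generalized Green's operators. Set C2 := (T2(B2⊥))⊥ ≤ V* and K1 := T1⁻¹(E1) ≤ V. Then G2 ∘ G1 is an outer inverse of T1 ∘ T2 if and only if B1⊥ ⊆ C2⊥ + (E2 ∩ B1⊥) + (E2 ∩ K1), where C2⊥ = {v ∈ V : γ(v) = 0 for all γ ∈ C2}. -/

import Mathlib

theorem stmt_11 {K U V W : Type*} [Field K]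
    [AddCommGroup U] [Module K U] [AddCommGroup V] [Module K V]
    [AddCommGroup W] [Module K W]
    (T1 : V →ₗ[K] W) (T2 : U →ₗ[K] V)
    (hT1 : Function.Surjective T1) (hT2 : Function.Surjective T2)
    (B1 : Submodule K (Module.Dual K V)) (B2 : Submodule K (Module.Dual K U))
    [FiniteDimensional K B1] [FiniteDimensional K B2]
    (E1 : Submodule K W) (E2 : Submodule K V)
    (hsemi1 : LinearMap.ker T1 ⊓ B1.dualCoannihilator = ⊥)
    (hreg1 : IsCompl (Submodule.map T1 B1.dualCoannihilator) E1)
    (hsemi2 : LinearMap.ker T2 ⊓ B2.dualCoannihilator = ⊥)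
    (hreg2 : IsCompl (Submodule.map T2 B2.dualCoannihilator) E2)
    (Q1 : W →ₗ[K] W) (hQ1 : Q1 ∘ₗ Q1 = Q1)
    (hQ1range : LinearMap.range Q1 = Submodule.map T1 B1.dualCoannihilator)
    (hQ1ker : LinearMap.ker Q1 = E1)
    (Q2 : V →ₗ[K] V) (hQ2 : Q2 ∘ₗ Q2 = Q2)
    (hQ2range : LinearMap.range Q2 = Submodule.map T2 B2.dualCoannihilator)
    (hQ2ker : LinearMap.ker Q2 = E2)
    (G1 : W →ₗ[K] V)
    (hG1 : ∀ f : W, G1 f ∈ B1.dualCoannihilator ∧ T1 (G1 f) = Q1 f)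
    (G2 : V →ₗ[K] U)
    (hG2 : ∀ f : V, G2 f ∈ B2.dualCoannihilator ∧ T2 (G2 f) = Q2 f)
    (C2 : Submodule K (Module.Dual K V))
    (hC2 : C2 = (Submodule.map T2 B2.dualCoannihilator).dualAnnihilator)
    (K1 : Submodule K V)
    (hK1 : K1 = Submodule.comap T1 E1) :
    ((G2 ∘ₗ G1) ∘ₗ (T1 ∘ₗ T2) ∘ₗ (G2 ∘ₗ G1) = G2 ∘ₗ G1) ↔
      (B1.dualCoannihilator ≤ C2.dualCoannihilator ⊔ (E2 ⊓ B1.dualCoannihilator) ⊔ (E2 ⊓ K1)) := by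
  -- C2.dualCoannihilator = range Q2
  have hC2eq : C2.dualCoannihilator = LinearMap.range Q2 := by
    rw [hC2, Subspace.dualAnnihilator_dualCoannihilator_eq, hQ2range]
  -- Q1, Q2 idempotent pointwise
  have hQ1idem : ∀ x, Q1 (Q1 x) = Q1 x := fun x => congrFun (congrArg DFunLike.coe hQ1) x
  have hQ2idem : ∀ x, Q2 (Q2 x) = Q2 x := fun x => congrFun (congrArg DFunLike.coe hQ2) x
  -- G2 determined by Q2
  have hG2uniq : ∀ a b : V, Q2 a = Q2 b → G2 a = G2 b := by
    intro a b hab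
    have h : G2 a - G2 b ∈ LinearMap.ker T2 ⊓ B2.dualCoannihilator := by
      constructor
      · simp [LinearMap.mem_ker, (hG2 a).2, (hG2 b).2, hab]
      · exact sub_mem (hG2 a).1 (hG2 b).1
    rw [hsemi2] at h
    exact sub_eq_zero.mp (Submodule.mem_bot K |>.mp h)
  have hG1uniq : ∀ a b : W, Q1 a = Q1 b → G1 a = G1 b := by
    intro a b hab
    have h : G1 a - G1 b ∈ LinearMap.ker T1 ⊓ B1.dualCoannihilator := by
      constructor
      · simp [LinearMap.mem_ker, (hG1 a).2, (hG1 b).2, hab]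
      · exact sub_mem (hG1 a).1 (hG1 b).1
    rw [hsemi1] at h
    exact sub_eq_zero.mp (Submodule.mem_bot K |>.mp h)
  -- G1 (T1 v) = v for v ∈ B1⊥
  have hG1T1 : ∀ v ∈ B1.dualCoannihilator, G1 (T1 v) = v := by
    intro v hv
    have hrange : T1 v ∈ LinearMap.range Q1 := by
      rw [hQ1range]; exact ⟨v, hv, rfl⟩
    obtain ⟨y, hy⟩ := hrange
    have hQ1T1 : Q1 (T1 v) = T1 v := by rw [← hy, hQ1idem]
    have h : G1 (T1 v) - v ∈ LinearMap.ker T1 ⊓ B1.dualCoannihilator := by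
      constructor
      · simp [LinearMap.mem_ker, (hG1 (T1 v)).2, hQ1T1]
      · exact sub_mem (hG1 (T1 v)).1 hv
    rw [hsemi1] at h
    exact sub_eq_zero.mp (Submodule.mem_bot K |>.mp h)
  constructor
  · -- outer inverse → subspace inclusion
    intro hout v hv
    have key := congrFun (congrArg DFunLike.coe hout) (T1 v)
    simp only [LinearMap.comp_apply] at key
    rw [hG1T1 v hv] at key
    -- key : G2 (G1 (T1 (T2 (G2 v)))) = G2 v
    rw [(hG2 v).2] at key
    set w := G1 (T1 (Q2 v)) with hw
    -- Q2 w = Q2 v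
    have hQ2w : Q2 w = Q2 v := by
      have := congrArg T2 key
      rw [(hG2 w).2, (hG2 v).2] at this
      exact this
    set r := Q2 v with hr
    -- decomposition v = r + (v - w) + (w - r)
    have hdecomp : v = (r + (v - w)) + (w - r) := by abel
    rw [hdecomp]
    refine Submodule.add_mem_sup (Submodule.add_mem_sup ?_ ?_) ?_
    · rw [hC2eq]; exact ⟨v, rfl⟩
    · refine Submodule.mem_inf.mpr ⟨?_, ?_⟩
      · rw [← hQ2ker]; simp [LinearMap.mem_ker, hQ2w, hr]
      · exact sub_mem hv (hG1 _).1
    · refine Submodule.mem_inf.mpr ⟨?_, ?_⟩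
      · rw [← hQ2ker]
        simp [LinearMap.mem_ker, hQ2w, hr, hQ2idem]
      · rw [hK1, Submodule.mem_comap, ← hQ1ker]
        have hT1w : T1 w = Q1 (T1 r) := (hG1 (T1 r)).2
        simp [LinearMap.mem_ker, hT1w, hQ1idem]
  · -- subspace inclusion → outer inverse
    intro hsub
    ext f
    simp only [LinearMap.comp_apply]
    set v := G1 f with hv
    have hvB1 : v ∈ B1.dualCoannihilator := (hG1 f).1
    have hmem := hsub hvB1
    rw [Submodule.mem_sup] at hmem
    obtain ⟨x, hx, k, hk, hxk⟩ := hmem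
    rw [Submodule.mem_sup] at hx
    obtain ⟨r, hrmem, e, he, hre⟩ := hx
    rw [hC2eq] at hrmem
    obtain ⟨y, hy⟩ := hrmem
    have heE2 : Q2 e = 0 := by rw [← LinearMap.mem_ker, hQ2ker]; exact he.1
    have heB1 : e ∈ B1.dualCoannihilator := he.2
    have hkE2 : Q2 k = 0 := by rw [← LinearMap.mem_ker, hQ2ker]; exact hk.1
    have hkK1 : Q1 (T1 k) = 0 := by
      rw [← LinearMap.mem_ker, hQ1ker]
      exact (Submodule.mem_comap.mp (hK1 ▸ hk.2))
    have hveq : v = r + e + k := by rw [← hxk, ← hre]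
    -- Q2 v = r
    have hQ2r : Q2 r = r := by rw [← hy, hQ2idem]
    have hQ2v : Q2 v = r := by
      rw [hveq]; simp [heE2, hkE2, hQ2r]
    rw [(hG2 v).2, hQ2v]
    -- G1 (T1 r) = v - e
    have hG1T1r : G1 (T1 r) = v - e := by
      have hr' : r = v - e - k := by rw [hveq]; abel
      have hG1k : G1 (T1 k) = 0 := by
        have := hG1uniq (T1 k) 0 (by simp [hkK1])
        simpa using this
      rw [hr']
      simp only [map_sub]
      rw [hG1k, sub_zero, hG1T1 v hvB1, hG1T1 e heB1]
    rw [hG1T1r]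
    exact hG2uniq (v - e) v (by simp [heE2])
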